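/- Let T be a bounded linear operator on a nonzero complex Hilbert space H and let f, g ∈ H with T*g = 0. If σ_p(T) = ∅, then σ_p(T + f⊗g) ⊆ σ_l(T) ∪ {⟨f,g⟩}. -/
import Mathlib


open scoped InnerProductSpace

/-- The rank one operator `f ⊗ g` given by `(f ⊗ g) h = ⟨h, g⟩ f`, where the inner
product is linear in the first argument (i.e. `⟪g, h⟫_ℂ • f` in Mathlib's convention). -/
noncomputable def rankOne {H : Type*} [NormedAddCommGroup H] [InnerProductSpace ℂ H]
    (f g : H) : H →L[ℂ] H := (innerSL ℂ g).smulRight f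

/-- The left spectrum of a bounded operator. -/
def leftSpectrum {H : Type*} [NormedAddCommGroup H] [InnerProductSpace ℂ H]
    (T : H →L[ℂ] H) : Set ℂ :=
  {l : ℂ | ¬ ∃ L : H →L[ℂ] H, L ∘L (T - l • (1 : H →L[ℂ] H)) = 1}

/-- The point spectrum (set of eigenvalues) of a bounded operator. -/
def pointSpectrum {H : Type*} [NormedAddCommGroup H] [InnerProductSpace ℂ H]
    (T : H →L[ℂ] H) : Set ℂ :=
  {l : ℂ | ∃ h : H, h ≠ 0 ∧ T h = l • h}

theorem pointSpectrum_rankOne_perturbation_subset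
    {H : Type*} [NormedAddCommGroup H] [InnerProductSpace ℂ H] [CompleteSpace H]
    [Nontrivial H] (T : H →L[ℂ] H) (f g : H)
    (hg : ContinuousLinearMap.adjoint T g = 0)
    (hp : pointSpectrum T = ∅) :
    pointSpectrum (T + rankOne f g) ⊆ leftSpectrum T ∪ {⟪g, f⟫_ℂ} := by
  rintro l ⟨h, hne, heq⟩
  have heq' : T h + ⟪g, h⟫_ℂ • f = l • h := by
    simpa [rankOne] using heq
  have hTgh : ⟪g, T h⟫_ℂ = 0 := by
    rw [← ContinuousLinearMap.adjoint_inner_left, hg, inner_zero_left]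
  by_cases hgh : ⟪g, h⟫_ℂ = 0
  · exfalso
    have : l ∈ pointSpectrum T := ⟨h, hne, by simpa [hgh] using heq'⟩
    simp [hp] at this
  · right
    have := congrArg (fun x => ⟪g, x⟫_ℂ) heq'
    simp only [inner_add_right, inner_smul_right, hTgh, zero_add] at this
    have hgl : ⟪g, f⟫_ℂ = l :=
      mul_left_cancel₀ hgh (this.trans (mul_comm _ _))
    simp [hgl]
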